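/- arXiv:0807.1496 — 4 statements merged into one kernel-verified Lean document; each statement's English description precedes it below -/
import Mathlib

section
/- Let X_1, ..., X_n be 0-1 valued random variables such that for every subset S of indices, E[∏_{i∈S} X_i] ≤ ∏_{i∈S} E[X_i] (negative correlation). Then for every λ > 0, E[exp(λ ∑_{i=1}^n X_i)] ≤ ∏_{i=1}^n E[exp(λ X_i)]. -/
open MeasureTheory Finset

/-- Negatively correlated 0-1 random variables satisfy the exponential moment
inequality: `E[exp(λ ∑ Xᵢ)] ≤ ∏ E[exp(λ Xᵢ)]` for every `λ > 0`. -/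
theorem negCorr_exp_moment
    {Ω : Type*} [MeasurableSpace Ω] (μ : Measure Ω) [IsProbabilityMeasure μ]
    (n : ℕ) (X : Fin n → Ω → ℝ)
    (hmeas : ∀ i, Measurable (X i))
    (h01 : ∀ i ω, X i ω = 0 ∨ X i ω = 1)
    (hneg : ∀ S : Finset (Fin n),
      (∫ ω, ∏ i ∈ S, X i ω ∂μ) ≤ ∏ i ∈ S, ∫ ω, X i ω ∂μ)
    (l : ℝ) (hl : 0 < l) :
    (∫ ω, Real.exp (l * ∑ i, X i ω) ∂μ) ≤ ∏ i, ∫ ω, Real.exp (l * X i ω) ∂μ := by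
  set c := Real.exp l - 1 with hc
  have hc0 : 0 ≤ c := by
    have := Real.one_le_exp hl.le
    simp only [hc]; linarith
  -- integrability of products
  have hXint : ∀ T : Finset (Fin n), Integrable (fun ω => ∏ i ∈ T, X i ω) μ := by
    intro T
    refine Integrable.mono' (integrable_const (1 : ℝ))
      ((Finset.measurable_prod T fun i _ => hmeas i).aestronglyMeasurable) ?_
    filter_upwards with ω
    have h0 : ∀ i ∈ T, (0:ℝ) ≤ X i ω := fun i _ => by rcases h01 i ω with h | h <;> simp [h]
    have h1 : ∀ i ∈ T, X i ω ≤ 1 := fun i _ => by rcases h01 i ω with h | h <;> simp [h]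
    rw [Real.norm_eq_abs, abs_of_nonneg (Finset.prod_nonneg h0)]
    exact Finset.prod_le_one h0 h1
  have hXi : ∀ i, Integrable (X i) μ := by
    intro i
    have := hXint {i}
    simpa using this
  have hexp : ∀ i ω, Real.exp (l * X i ω) = 1 + c * X i ω := by
    intro i ω
    rcases h01 i ω with h | h <;> simp [h, hc]
  -- LHS expansion
  have lhs_eq : (∫ ω, Real.exp (l * ∑ i, X i ω) ∂μ)
      = ∑ T ∈ (univ : Finset (Fin n)).powerset, c ^ T.card * ∫ ω, ∏ i ∈ T, X i ω ∂μ := by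
    have key : ∀ ω, Real.exp (l * ∑ i, X i ω)
        = ∑ T ∈ (univ : Finset (Fin n)).powerset, c ^ T.card * ∏ i ∈ T, X i ω := by
      intro ω
      rw [Finset.mul_sum, Real.exp_sum]
      calc ∏ i, Real.exp (l * X i ω) = ∏ i, (c * X i ω + 1) := by
            refine Finset.prod_congr rfl fun i _ => ?_
            rw [hexp]; ring
        _ = ∑ T ∈ (univ : Finset (Fin n)).powerset,
            (∏ i ∈ T, (c * X i ω)) * ∏ i ∈ univ \ T, 1 := Finset.prod_add _ _ _
        _ = ∑ T ∈ (univ : Finset (Fin n)).powerset, c ^ T.card * ∏ i ∈ T, X i ω := by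
            refine Finset.sum_congr rfl fun T _ => ?_
            rw [Finset.prod_const_one, mul_one, Finset.prod_mul_distrib, Finset.prod_const]
    simp_rw [key]
    rw [integral_finset_sum _ (fun T _ => (hXint T).const_mul _)]
    exact Finset.sum_congr rfl fun T _ => integral_const_mul _ _
  -- RHS expansion
  have rhs_eq : (∏ i, ∫ ω, Real.exp (l * X i ω) ∂μ)
      = ∑ T ∈ (univ : Finset (Fin n)).powerset, c ^ T.card * ∏ i ∈ T, ∫ ω, X i ω ∂μ := by
    have hi : ∀ i : Fin n, (∫ ω, Real.exp (l * X i ω) ∂μ) = c * (∫ ω, X i ω ∂μ) + 1 := by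
      intro i
      simp_rw [hexp i]
      rw [integral_add (integrable_const 1) ((hXi i).const_mul c), integral_const,
        integral_const_mul]
      simp [add_comm]
    calc (∏ i, ∫ ω, Real.exp (l * X i ω) ∂μ) = ∏ i, (c * (∫ ω, X i ω ∂μ) + 1) :=
          Finset.prod_congr rfl fun i _ => hi i
      _ = ∑ T ∈ (univ : Finset (Fin n)).powerset,
          (∏ i ∈ T, (c * ∫ ω, X i ω ∂μ)) * ∏ i ∈ univ \ T, 1 := Finset.prod_add _ _ _
      _ = ∑ T ∈ (univ : Finset (Fin n)).powerset, c ^ T.card * ∏ i ∈ T, ∫ ω, X i ω ∂μ := by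
          refine Finset.sum_congr rfl fun T _ => ?_
          rw [Finset.prod_const_one, mul_one, Finset.prod_mul_distrib, Finset.prod_const]
  rw [lhs_eq, rhs_eq]
  exact Finset.sum_le_sum fun T _ =>
    mul_le_mul_of_nonneg_left (hneg T) (pow_nonneg hc0 _)
end

section
/- Let X_1, ..., X_n be 0-1 random variables such that both {X_i} and {1 - X_i} are negatively correlated families, with p_i = P[X_i = 1] and p = (1/n)∑ p_i. Then for every λ > 0, P[∑_{i=1}^n X_i < pn - λ] ≤ exp(-λ²/(2pn)). -/
open MeasureTheory Finset

lemma exp_neg_le_quadratic' {t : ℝ} (ht : 0 ≤ t) : Real.exp (-t) ≤ 1 - t + t^2/2 := by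
  have h1 : 1 + t + t^2/2 ≤ Real.exp t := Real.quadratic_le_exp_of_nonneg ht
  rw [Real.exp_neg, inv_eq_one_div, div_le_iff₀ (Real.exp_pos t)]
  nlinarith [Real.exp_pos t, sq_nonneg (t^2)]

/-- Chernoff-type lower tail bound for sums of 0-1 random variables such that
both `{Xᵢ}` and `{1 - Xᵢ}` are negatively correlated families. -/
theorem negCorr_chernoff_lower_tail
    {Ω : Type*} [MeasurableSpace Ω] (μ : Measure Ω) [IsProbabilityMeasure μ]
    (n : ℕ) (hn : 0 < n) (X : Fin n → Ω → ℝ)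
    (hmeas : ∀ i, Measurable (X i))
    (h01 : ∀ i ω, X i ω = 0 ∨ X i ω = 1)
    (hneg : ∀ S : Finset (Fin n),
      (∫ ω, ∏ i ∈ S, X i ω ∂μ) ≤ ∏ i ∈ S, ∫ ω, X i ω ∂μ)
    (hneg' : ∀ S : Finset (Fin n),
      (∫ ω, ∏ i ∈ S, (1 - X i ω) ∂μ) ≤ ∏ i ∈ S, ∫ ω, (1 - X i ω) ∂μ)
    (p : ℝ)
    (hp : p = (1 / n) * ∑ i, (μ {ω | X i ω = 1}).toReal)
    (lam : ℝ) (hlam : 0 < lam) :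
    (μ {ω | ∑ i, X i ω < p * n - lam}).toReal ≤ Real.exp (-lam ^ 2 / (2 * p * n)) := by
  have hn' : (0:ℝ) < n := Nat.cast_pos.mpr hn
  have hX0 : ∀ i ω, 0 ≤ X i ω := fun i ω => by rcases h01 i ω with h | h <;> simp [h]
  have hX1 : ∀ i ω, X i ω ≤ 1 := fun i ω => by rcases h01 i ω with h | h <;> simp [h]
  -- trivial case
  rcases le_or_gt p 0 with hple | hppos
  · have hempty : {ω | ∑ i, X i ω < p * n - lam} = ∅ := by
      ext ω
      simp only [Set.mem_setOf_eq, Set.mem_empty_iff_false, iff_false, not_lt]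
      have hsum : (0:ℝ) ≤ ∑ i, X i ω := Finset.sum_nonneg fun i _ => hX0 i ω
      nlinarith [mul_nonpos_of_nonpos_of_nonneg hple hn'.le]
    rw [hempty]
    simpa using (Real.exp_pos _).le
  -- main case
  set pr : Fin n → ℝ := fun i => (μ {ω | X i ω = 1}).toReal with hpr
  have hpr0 : ∀ i, 0 ≤ pr i := fun i => ENNReal.toReal_nonneg
  have hpr1 : ∀ i, pr i ≤ 1 := fun i => by
    have := prob_le_one (μ := μ) (s := {ω | X i ω = 1})
    simpa [hpr] using ENNReal.toReal_mono (by simp) this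
  have hsum_pr : ∑ i, pr i = p * n := by
    rw [hp]; field_simp
  -- integral of X i equals pr i
  have hintX : ∀ i, Integrable (X i) μ := by
    intro i
    refine (integrable_const (1:ℝ)).mono' (hmeas i).aestronglyMeasurable ?_
    exact Filter.Eventually.of_forall fun ω => by
      rw [Real.norm_eq_abs, abs_of_nonneg (hX0 i ω)]; exact hX1 i ω
  have hIX : ∀ i, ∫ ω, X i ω ∂μ = pr i := by
    intro i
    have hset : MeasurableSet {ω | X i ω = 1} := (hmeas i) (measurableSet_singleton 1)
    have hfun : X i = Set.indicator {ω | X i ω = 1} (fun _ => (1:ℝ)) := by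
      funext ω
      rcases h01 i ω with h | h
      · rw [h, Set.indicator_of_notMem]; simp [Set.mem_setOf_eq, h]
      · rw [h, Set.indicator_of_mem]; exact h
    rw [show (fun ω => X i ω) = X i from rfl, hfun]
    exact integral_indicator_one (μ := μ) hset
  have hI1X : ∀ i, ∫ ω, (1 - X i ω) ∂μ = 1 - pr i := by
    intro i
    rw [integral_sub (integrable_const 1) (hintX i), hIX i]
    simp
  -- parameters
  set a : ℝ := p * n with ha_def
  have ha : 0 < a := mul_pos hppos hn'
  set t : ℝ := lam / a with ht_def
  have ht : 0 < t := div_pos hlam ha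
  set c : ℝ := Real.exp (-t) with hc_def
  set d : ℝ := 1 - c with hd_def
  have hc0 : 0 < c := Real.exp_pos _
  have hc1 : c ≤ 1 := Real.exp_le_one_iff.mpr (by linarith)
  have hd0 : 0 ≤ d := by simp [hd_def]; linarith
  have hd1 : d ≤ 1 := by simp [hd_def]; linarith
  have hd_ge : t - t^2/2 ≤ d := by
    have := exp_neg_le_quadratic' ht.le
    simp only [hd_def, hc_def]; linarith
  -- integrability of products of (1 - X i)
  have hmeas1X : ∀ i, Measurable (fun ω => 1 - X i ω) := fun i => measurable_const.sub (hmeas i)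
  have hintT : ∀ T : Finset (Fin n), Integrable (fun ω => ∏ i ∈ T, (1 - X i ω)) μ := by
    intro T
    refine (integrable_const (1:ℝ)).mono'
      (Finset.measurable_prod T fun i _ => hmeas1X i).aestronglyMeasurable ?_
    refine Filter.Eventually.of_forall fun ω => ?_
    rw [Real.norm_eq_abs, abs_of_nonneg (Finset.prod_nonneg fun i _ => by linarith [hX1 i ω])]
    exact Finset.prod_le_one (fun i _ => by linarith [hX1 i ω]) (fun i _ => by linarith [hX0 i ω])
  -- pointwise expansion
  have hpt : ∀ ω, Real.exp (-t * ∑ i, X i ω) =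
      ∑ T ∈ (Finset.univ : Finset (Fin n)).powerset,
        d ^ T.card * c ^ (Finset.univ \ T).card * ∏ i ∈ T, (1 - X i ω) := by
    intro ω
    have h1 : Real.exp (-t * ∑ i, X i ω) = ∏ i, Real.exp (-t * X i ω) := by
      rw [← Real.exp_sum, Finset.mul_sum]
    have h2 : ∀ i, Real.exp (-t * X i ω) = d * (1 - X i ω) + c := by
      intro i
      rcases h01 i ω with h | h <;> simp [h, hd_def, hc_def]
    rw [h1]
    simp_rw [h2]
    rw [Finset.prod_add]
    refine Finset.sum_congr rfl fun T hT => ?_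
    rw [Finset.prod_const, Finset.prod_mul_distrib, Finset.prod_const]
    ring
  -- MGF bound
  have hcoef : ∀ T : Finset (Fin n), (0:ℝ) ≤ d ^ T.card * c ^ (Finset.univ \ T).card :=
    fun T => mul_nonneg (pow_nonneg hd0 _) (pow_nonneg hc0.le _)
  have hmgf : (∫ ω, Real.exp (-t * ∑ i, X i ω) ∂μ) ≤ ∏ i, (1 - d * pr i) := by
    calc (∫ ω, Real.exp (-t * ∑ i, X i ω) ∂μ)
        = ∑ T ∈ (Finset.univ : Finset (Fin n)).powerset,
            d ^ T.card * c ^ (Finset.univ \ T).card * ∫ ω, ∏ i ∈ T, (1 - X i ω) ∂μ := by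
          simp_rw [hpt]
          rw [integral_finset_sum _ fun T _ => (hintT T).const_mul _]
          exact Finset.sum_congr rfl fun T _ => integral_const_mul _ _
      _ ≤ ∑ T ∈ (Finset.univ : Finset (Fin n)).powerset,
            d ^ T.card * c ^ (Finset.univ \ T).card * ∏ i ∈ T, (1 - pr i) := by
          refine Finset.sum_le_sum fun T _ => mul_le_mul_of_nonneg_left ?_ (hcoef T)
          calc (∫ ω, ∏ i ∈ T, (1 - X i ω) ∂μ) ≤ ∏ i ∈ T, ∫ ω, (1 - X i ω) ∂μ := hneg' T
            _ = ∏ i ∈ T, (1 - pr i) := Finset.prod_congr rfl fun i _ => hI1X i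
      _ = ∏ i, (d * (1 - pr i) + c) := by
          rw [Finset.prod_add]
          refine Finset.sum_congr rfl fun T hT => ?_
          rw [Finset.prod_const, Finset.prod_mul_distrib, Finset.prod_const]
          ring
      _ = ∏ i, (1 - d * pr i) := by
          refine Finset.prod_congr rfl fun i _ => ?_
          simp [hd_def]; ring
  -- product bound
  have hprod : ∏ i, (1 - d * pr i) ≤ Real.exp (-(d * a)) := by
    calc ∏ i, (1 - d * pr i) ≤ ∏ i, Real.exp (-(d * pr i)) := by
          refine Finset.prod_le_prod (fun i _ => ?_) (fun i _ => Real.one_sub_le_exp_neg _)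
          have : d * pr i ≤ 1 := le_trans (by nlinarith [hpr0 i, hpr1 i]) hd1
          linarith
      _ = Real.exp (∑ i, -(d * pr i)) := (Real.exp_sum _ _).symm
      _ = Real.exp (-(d * a)) := by
          congr 1
          rw [Finset.sum_neg_distrib, ← Finset.mul_sum, hsum_pr]
  -- Markov's inequality
  have hSmeas : Measurable fun ω => Real.exp (-t * ∑ i, X i ω) :=
    (Real.measurable_exp).comp ((measurable_const.mul (Finset.measurable_sum _ fun i _ => hmeas i)))
  have hSint : Integrable (fun ω => Real.exp (-t * ∑ i, X i ω)) μ := by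
    refine (integrable_const (1:ℝ)).mono' hSmeas.aestronglyMeasurable ?_
    refine Filter.Eventually.of_forall fun ω => ?_
    rw [Real.norm_eq_abs, abs_of_pos (Real.exp_pos _)]
    refine Real.exp_le_one_iff.mpr ?_
    have : (0:ℝ) ≤ ∑ i, X i ω := Finset.sum_nonneg fun i _ => hX0 i ω
    nlinarith
  set ε : ℝ := Real.exp (-t * (a - lam)) with hε_def
  have hε : 0 < ε := Real.exp_pos _
  have hsubset : {ω | ∑ i, X i ω < p * ↑n - lam} ⊆
      {ω | ε ≤ Real.exp (-t * ∑ i, X i ω)} := by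
    intro ω hω
    simp only [Set.mem_setOf_eq] at hω ⊢
    refine Real.exp_le_exp.mpr ?_
    have : ∑ i, X i ω < a - lam := hω
    nlinarith
  have hmarkov : ε * (μ {ω | ∑ i, X i ω < p * ↑n - lam}).toReal ≤
      ∫ ω, Real.exp (-t * ∑ i, X i ω) ∂μ := by
    refine le_trans ?_ (mul_meas_ge_le_integral_of_nonneg
      (Filter.Eventually.of_forall fun ω => (Real.exp_pos _).le) hSint ε)
    refine mul_le_mul_of_nonneg_left ?_ hε.le
    exact ENNReal.toReal_mono (measure_ne_top μ _) (measure_mono hsubset)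
  -- combine
  have hfinal : (μ {ω | ∑ i, X i ω < p * ↑n - lam}).toReal ≤ ε⁻¹ * Real.exp (-(d * a)) := by
    rw [← mul_le_mul_iff_right₀ hε, ← mul_assoc, mul_inv_cancel₀ hε.ne', one_mul]
    exact le_trans hmarkov (le_trans hmgf hprod)
  refine le_trans hfinal ?_
  have hεinv : ε⁻¹ = Real.exp (t * (a - lam)) := by
    rw [hε_def, ← Real.exp_neg]; ring_nf
  rw [hεinv, ← Real.exp_add]
  refine Real.exp_le_exp.mpr ?_
  have hta : t * a = lam := by rw [ht_def]; field_simp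
  have h2pn : 2 * p * ↑n = 2 * a := by rw [ha_def]; ring
  rw [h2pn]
  have hkey : t * (a - lam) + -((t - t^2/2) * a) = -lam^2/(2*a) := by
    rw [ht_def]; field_simp; ring
  nlinarith [mul_le_mul_of_nonneg_right hd_ge ha.le]
end

section
/- Let G be a d-regular connected graph on n vertices and let U be the union of k independent uniformly random spanning trees of G. Suppose for each tree T and each set A ⊆ V the cut edge indicators are negatively correlated with marginals at least 1/d. Then for every A ⊆ V, P[|δ_U(A)| < |δ_G(A)|/(2d)] < exp(-k|δ_G(A)|/(8d²)). -/
open MeasureTheory ProbabilityTheory Finset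
open scoped Classical

/-- The set of spanning trees of a graph `G` on a finite vertex set. -/
noncomputable def spanningTrees {V : Type*} [Fintype V] [DecidableEq V]
    (G : SimpleGraph V) : Finset (SimpleGraph V) :=
  Finset.univ.filter (fun T => T ≤ G ∧ T.IsTree)

/-- `δ_H(A)`: the set of (ordered) edges of `H` leaving `A`. -/
noncomputable def edgeCut {V : Type*} [Fintype V] [DecidableEq V]
    (H : SimpleGraph V) (A : Finset V) : Finset (V × V) :=
  Finset.univ.filter (fun p => H.Adj p.1 p.2 ∧ p.1 ∈ A ∧ p.2 ∉ A)

/-- Subadditivity bound for a random element uniformly distributed on `ST`. -/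
lemma aux_measure_mem_le {Ω α : Type*} [MeasurableSpace Ω] [DecidableEq α] (μ : Measure Ω)
    (X : Ω → α) (ST : Finset α)
    (hunif : ∀ T ∈ ST, μ {ω | X ω = T} = 1 / (ST.card : ENNReal))
    (B : Finset α) (hB : B ⊆ ST) :
    μ {ω | X ω ∈ B} ≤ (B.card : ENNReal) / ST.card := by
  have hcover : {ω | X ω ∈ B} = ⋃ T ∈ B, {ω | X ω = T} := by
    ext ω; simp
  rw [hcover]
  refine le_trans (measure_biUnion_finset_le B _) ?_
  have hsum : ∀ T ∈ B, μ {ω | X ω = T} = 1 / (ST.card : ENNReal) :=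
    fun T hT => hunif T (hB hT)
  rw [Finset.sum_congr rfl hsum, Finset.sum_const, nsmul_eq_mul, mul_one_div]

/-- The level sets of a uniformly distributed random element are null measurable. -/
lemma aux_null_meas {Ω α : Type*} [MeasurableSpace Ω] [DecidableEq α] (μ : Measure Ω)
    [IsProbabilityMeasure μ]
    (X : Ω → α) (ST : Finset α) (hspan : ∀ ω, X ω ∈ ST)
    (hunif : ∀ T ∈ ST, μ {ω | X ω = T} = 1 / (ST.card : ENNReal))
    {T : α} (hT : T ∈ ST) : NullMeasurableSet {ω | X ω = T} μ := by
  set s := {ω | X ω = T} with hs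
  have hNpos : 0 < ST.card := Finset.card_pos.mpr ⟨T, hT⟩
  have hsc : μ sᶜ ≤ ((ST.card - 1 : ℕ) : ENNReal) / ST.card := by
    have hcomp : sᶜ = {ω | X ω ∈ ST.erase T} := by
      ext ω
      simp only [hs, Set.mem_compl_iff, Set.mem_setOf_eq, Finset.mem_erase]
      exact ⟨fun h => ⟨h, hspan ω⟩, fun h => h.1⟩
    rw [hcomp]
    simpa [Finset.card_erase_of_mem hT] using
      aux_measure_mem_le μ X ST hunif (ST.erase T) (Finset.erase_subset _ _)
  have htot : μ s + μ sᶜ ≤ 1 := by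
    calc μ s + μ sᶜ ≤ 1 / (ST.card : ENNReal) + ((ST.card - 1 : ℕ) : ENNReal) / ST.card :=
          add_le_add (le_of_eq (hunif T hT)) hsc
      _ = 1 := by
          rw [ENNReal.div_add_div_same]
          have h1 : (1 : ENNReal) + ((ST.card - 1 : ℕ) : ENNReal) = (ST.card : ENNReal) := by
            have h2 : 1 + (ST.card - 1) = ST.card := by omega
            exact_mod_cast congrArg (fun n : ℕ => (n : ENNReal)) h2
          rw [h1, ENNReal.div_self (by exact_mod_cast hNpos.ne') (by simp)]
  set u := toMeasurable μ s with hu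
  set v := toMeasurable μ sᶜ with hv
  have huv : u ∪ v = Set.univ := by
    apply Set.eq_univ_of_univ_subset
    intro ω _
    by_cases h : ω ∈ s
    · exact Or.inl (subset_toMeasurable μ s h)
    · exact Or.inr (subset_toMeasurable μ sᶜ h)
  have h0 : μ (u ∩ v) = 0 := by
    have h1 : μ (u ∪ v) + μ (u ∩ v) = μ u + μ v :=
      measure_union_add_inter u (measurableSet_toMeasurable μ sᶜ)
    rw [huv, measure_univ, hu, hv, measure_toMeasurable, measure_toMeasurable] at h1
    have h2 : (1 : ENNReal) + μ (u ∩ v) ≤ 1 + 0 := by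
      rw [add_zero, h1]; exact htot
    have h3 : μ (u ∩ v) ≤ 0 := (ENNReal.add_le_add_iff_left (by simp)).mp h2
    exact le_antisymm h3 (zero_le)
  have hae : s =ᵐ[μ] u := by
    rw [ae_eq_set]
    constructor
    · have hds : s \ u = ∅ := Set.diff_eq_empty.mpr (subset_toMeasurable μ s)
      simp [hds]
    · refine measure_mono_null ?_ h0
      intro ω hω
      exact ⟨hω.1, subset_toMeasurable μ sᶜ hω.2⟩
  exact ((measurableSet_toMeasurable μ s).nullMeasurableSet).congr hae.symm

/-- Integral of a function of a uniformly distributed random element equals the average. -/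
lemma aux_integral {Ω α : Type*} [MeasurableSpace Ω] [DecidableEq α] (μ : Measure Ω)
    [IsProbabilityMeasure μ]
    (X : Ω → α) (ST : Finset α) (hspan : ∀ ω, X ω ∈ ST)
    (hunif : ∀ T ∈ ST, μ {ω | X ω = T} = 1 / (ST.card : ENNReal))
    (g : α → ℝ) :
    ∫ ω, g (X ω) ∂μ = (∑ T ∈ ST, g T) / ST.card := by
  have haeeq : (fun ω => g (X ω)) =ᵐ[μ]
      (fun ω => ∑ T ∈ ST, Set.indicator (toMeasurable μ {ω' | X ω' = T}) (fun _ => g T) ω) := by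
    have h1 : ∀ T ∈ ST,
        (Set.indicator {ω' | X ω' = T} (fun _ => g T) : Ω → ℝ) =ᵐ[μ]
          Set.indicator (toMeasurable μ {ω' | X ω' = T}) (fun _ => g T) := by
      intro T hT
      exact indicator_ae_eq_of_ae_eq_set
        ((aux_null_meas μ X ST hspan hunif hT).toMeasurable_ae_eq).symm
    have h2 : ∀ᵐ ω ∂μ, ∀ T ∈ ST,
        (Set.indicator {ω' | X ω' = T} (fun _ => g T) : Ω → ℝ) ω =
          Set.indicator (toMeasurable μ {ω' | X ω' = T}) (fun _ => g T) ω :=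
      (Filter.eventually_all_finset ST).mpr h1
    filter_upwards [h2] with ω hω
    have hptw : g (X ω) = ∑ T ∈ ST, Set.indicator {ω' | X ω' = T} (fun _ => g T) ω := by
      simp only [Set.indicator_apply, Set.mem_setOf_eq]
      rw [Finset.sum_ite_eq ST (X ω) g, if_pos (hspan ω)]
    rw [hptw]
    exact Finset.sum_congr rfl hω
  rw [integral_congr_ae haeeq,
    integral_finset_sum ST
      (fun T _ => (integrable_const (g T)).indicator (measurableSet_toMeasurable μ _))]
  have hterm : ∀ T ∈ ST,
      (∫ ω, Set.indicator (toMeasurable μ {ω' | X ω' = T}) (fun _ => g T) ω ∂μ) =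
        g T * (1 / (ST.card : ℝ)) := by
    intro T hT
    rw [integral_indicator_const (g T) (measurableSet_toMeasurable μ _),
      Measure.real, measure_toMeasurable, hunif T hT, smul_eq_mul, mul_comm]
    congr 1
    simp [ENNReal.toReal_div]
  rw [Finset.sum_congr rfl hterm, ← Finset.sum_mul, mul_one_div]

set_option maxHeartbeats 2000000 in
/-- For a `d`-regular connected graph `G`, and `U` the union of `k` independent
uniformly random spanning trees of `G`, assuming negative correlation (of the cut edge
indicators and their complements) and marginals at least `1/d` for each tree, every cut
of `U` is at least `|δ_G(A)|/(2d)` except with probability less than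
`exp(-k |δ_G(A)| / (8 d²))`. -/
theorem splicer_cut_lower_tail
    {V : Type*} [Fintype V] [DecidableEq V] (G : SimpleGraph V) (d : ℕ) (hd : 0 < d)
    (hreg : G.IsRegularOfDegree d) (hG : G.Connected)
    (k : ℕ) (hk : 0 < k)
    {Ω : Type*} [MeasurableSpace Ω] (μ : Measure Ω) [IsProbabilityMeasure μ]
    (Tr : Fin k → Ω → SimpleGraph V)
    -- each `Tr i` is a uniformly random spanning tree of `G`:
    (hspan : ∀ i ω, Tr i ω ∈ spanningTrees G)
    (hunif : ∀ i, ∀ T ∈ spanningTrees G,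
      μ {ω | Tr i ω = T} = 1 / ((spanningTrees G).card : ENNReal))
    -- the `k` trees are mutually independent:
    (hindep : iIndepFun (m := fun _ => (⊤ : MeasurableSpace (SimpleGraph V))) Tr μ)
    (A : Finset V)
    -- negative correlation of cut edge indicators of each tree:
    (hneg : ∀ i, ∀ S : Finset (V × V), S ⊆ edgeCut G A →
      (∫ ω, ∏ p ∈ S, (if (Tr i ω).Adj p.1 p.2 then (1:ℝ) else 0) ∂μ) ≤
        ∏ p ∈ S, ∫ ω, (if (Tr i ω).Adj p.1 p.2 then (1:ℝ) else 0) ∂μ)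
    (hneg' : ∀ i, ∀ S : Finset (V × V), S ⊆ edgeCut G A →
      (∫ ω, ∏ p ∈ S, (1 - if (Tr i ω).Adj p.1 p.2 then (1:ℝ) else 0) ∂μ) ≤
        ∏ p ∈ S, ∫ ω, (1 - if (Tr i ω).Adj p.1 p.2 then (1:ℝ) else 0) ∂μ)
    -- marginals at least `1/d`:
    (hmarg : ∀ i, ∀ p ∈ edgeCut G A,
      (1 : ℝ) / d ≤ (μ {ω | (Tr i ω).Adj p.1 p.2}).toReal) :
    μ {ω | ((edgeCut (⨆ i, Tr i ω) A).card : ℝ) < ((edgeCut G A).card : ℝ) / (2 * d)}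
      < ENNReal.ofReal
          (Real.exp (-(k * ((edgeCut G A).card : ℝ)) / (8 * (d : ℝ) ^ 2))) := by
  classical
  set ST := spanningTrees G with hSTdef
  set C := edgeCut G A with hCdef
  set N := ST.card with hNdef
  set m := C.card with hmdef
  set τ : ℝ := (m : ℝ) / (2 * d) with hτdef
  set B := ST.filter (fun T => ((edgeCut T A).card : ℝ) < τ) with hBdef
  have hBsub : B ⊆ ST := Finset.filter_subset _ _
  set i0 : Fin k := ⟨0, hk⟩ with hi0
  -- Ω is nonempty, hence there is a spanning tree
  have hΩne : Nonempty Ω := by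
    by_contra h
    rw [not_nonempty_iff] at h
    have h1 : μ Set.univ = 1 := measure_univ
    rw [Set.univ_eq_empty_iff.mpr h] at h1
    simp at h1
  obtain ⟨ω0⟩ := hΩne
  have hNpos : 0 < N := Finset.card_pos.mpr ⟨Tr i0 ω0, hspan i0 ω0⟩
  have hNr : (0 : ℝ) < N := by exact_mod_cast hNpos
  have hdr : (0 : ℝ) < d := by exact_mod_cast hd
  -- the event is contained in the intersection of per-tree events
  have hsub : {ω | ((edgeCut (⨆ i, Tr i ω) A).card : ℝ) < τ} ⊆
      ⋂ i, {ω | Tr i ω ∈ B} := by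
    intro ω hω
    simp only [Set.mem_setOf_eq] at hω
    simp only [Set.mem_iInter, Set.mem_setOf_eq]
    intro i
    rw [hBdef, Finset.mem_filter]
    refine ⟨hspan i ω, ?_⟩
    refine lt_of_le_of_lt ?_ hω
    have hmono : edgeCut (Tr i ω) A ⊆ edgeCut (⨆ j, Tr j ω) A := by
      intro p hp
      simp only [edgeCut, Finset.mem_filter, Finset.mem_univ, true_and] at hp ⊢
      exact ⟨(le_iSup (fun j => Tr j ω) i) hp.1, hp.2⟩
    exact_mod_cast Finset.card_le_card hmono
  -- independence gives the product bound
  have hprod : μ (⋂ i, {ω | Tr i ω ∈ B}) = ∏ i, μ {ω | Tr i ω ∈ B} := by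
    refine hindep.meas_iInter (fun i => ?_)
    exact ⟨{T | T ∈ B}, MeasurableSpace.measurableSet_top, rfl⟩
  have hBle : ∀ i : Fin k, μ {ω | Tr i ω ∈ B} ≤ (B.card : ENNReal) / N :=
    fun i => aux_measure_mem_le μ (Tr i) ST (hunif i) B hBsub
  have hmain : μ {ω | ((edgeCut (⨆ i, Tr i ω) A).card : ℝ) < τ} ≤
      ((B.card : ENNReal) / N) ^ k := by
    calc μ {ω | ((edgeCut (⨆ i, Tr i ω) A).card : ℝ) < τ}
        ≤ μ (⋂ i, {ω | Tr i ω ∈ B}) := measure_mono hsub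
      _ = ∏ i, μ {ω | Tr i ω ∈ B} := hprod
      _ ≤ ∏ _i : Fin k, ((B.card : ENNReal) / N) :=
          Finset.prod_le_prod' (fun i _ => hBle i)
      _ = ((B.card : ENNReal) / N) ^ k := by
          rw [Finset.prod_const, Finset.card_univ, Fintype.card_fin]
  -- the real-valued inequality
  have hreal : ((B.card : ℝ) / N) ^ k < Real.exp (-(k * (m : ℝ)) / (8 * (d : ℝ) ^ 2)) := by
    by_cases hBe : B = ∅
    · rw [hBe]
      simp only [Finset.card_empty, Nat.cast_zero, zero_div]
      rw [zero_pow hk.ne']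
      exact Real.exp_pos _
    · obtain ⟨T0, hT0⟩ := Finset.nonempty_iff_ne_empty.mpr hBe
      have hT0ST : T0 ∈ ST := hBsub hT0
      have hT0cut : ((edgeCut T0 A).card : ℝ) < τ := (Finset.mem_filter.mp hT0).2
      have hm1 : 0 < m := by
        rcases Nat.eq_zero_or_pos m with h | h
        · exfalso
          rw [hτdef, h] at hT0cut
          have hc0 : (0:ℝ) ≤ ((edgeCut T0 A).card : ℝ) := Nat.cast_nonneg _
          simp at hT0cut
          linarith
        · exact h
      have hmr : (0 : ℝ) < m := by exact_mod_cast hm1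
      -- marginals: fraction of trees containing each cut edge is at least 1/d
      have hpmarg : ∀ p ∈ C, (1 : ℝ) / d ≤
          ((ST.filter (fun T => T.Adj p.1 p.2)).card : ℝ) / N := by
        intro p hp
        refine le_trans (hmarg i0 p hp) ?_
        have hset : {ω | (Tr i0 ω).Adj p.1 p.2} =
            {ω | Tr i0 ω ∈ ST.filter (fun T => T.Adj p.1 p.2)} := by
          ext ω
          simp only [Set.mem_setOf_eq, Finset.mem_filter]
          exact ⟨fun h => ⟨hspan i0 ω, h⟩, fun h => h.2⟩
        rw [hset]
        have h1 := aux_measure_mem_le μ (Tr i0) ST (hunif i0)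
          (ST.filter (fun T => T.Adj p.1 p.2)) (Finset.filter_subset _ _)
        have h2 := ENNReal.toReal_mono
          ((ENNReal.div_lt_top (by simp) (by exact_mod_cast hNpos.ne')).ne) h1
        refine le_trans h2 ?_
        rw [ENNReal.toReal_div]
        simp
        exact le_rfl
      -- each tree in ST has cut contained in C
      have hcutT : ∀ T ∈ ST, edgeCut T A = C.filter (fun p => T.Adj p.1 p.2) := by
        intro T hT
        have hTG : T ≤ G := by
          rw [hSTdef, spanningTrees, Finset.mem_filter] at hT
          exact hT.2.1
        ext p
        simp only [edgeCut, hCdef, Finset.mem_filter, Finset.mem_univ, true_and]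
        constructor
        · rintro ⟨h1, h2⟩
          exact ⟨⟨hTG h1, h2⟩, h1⟩
        · rintro ⟨⟨_, h2⟩, h3⟩
          exact ⟨h3, h2⟩
      -- d ≥ 2
      have hd2 : 2 ≤ d := by
        by_contra hlt
        have hd1 : d = 1 := by omega
        have hall : ∀ p ∈ C, T0.Adj p.1 p.2 := by
          intro p hp
          have h1 := hpmarg p hp
          rw [hd1] at h1
          simp only [Nat.cast_one, div_one] at h1
          have h2 : (N : ℝ) ≤ ((ST.filter (fun T => T.Adj p.1 p.2)).card : ℝ) := by
            rw [le_div_iff₀ hNr] at h1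
            linarith
          have h3 : N ≤ (ST.filter (fun T => T.Adj p.1 p.2)).card := by exact_mod_cast h2
          have h4 : ST.filter (fun T => T.Adj p.1 p.2) = ST :=
            Finset.eq_of_subset_of_card_le (Finset.filter_subset _ _) h3
          have h5 : T0 ∈ ST.filter (fun T => T.Adj p.1 p.2) := by rw [h4]; exact hT0ST
          exact (Finset.mem_filter.mp h5).2
        have hcuteq : edgeCut T0 A = C := by
          rw [hcutT T0 hT0ST]
          exact Finset.filter_true_of_mem hall
        rw [hcuteq, hτdef, hd1] at hT0cut
        push_cast at hT0cut
        linarith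
      have hdr2 : (2 : ℝ) ≤ d := by exact_mod_cast hd2
      -- per-edge complementary marginals
      set q : V × V → ℝ :=
        fun p => (∑ T ∈ ST, (1 - if T.Adj p.1 p.2 then (1:ℝ) else 0)) / N with hqdef
      have hq_nonneg : ∀ p, 0 ≤ q p := by
        intro p
        apply div_nonneg _ (le_of_lt hNr)
        apply Finset.sum_nonneg
        intro T _
        split_ifs <;> norm_num
      have hq_le : ∀ p ∈ C, q p ≤ 1 - 1 / d := by
        intro p hp
        show (∑ T ∈ ST, (1 - if T.Adj p.1 p.2 then (1:ℝ) else 0)) / (N:ℝ) ≤ 1 - 1 / d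
        have hsum : ∑ T ∈ ST, (1 - if T.Adj p.1 p.2 then (1:ℝ) else 0) =
            (N : ℝ) - ((ST.filter (fun T => T.Adj p.1 p.2)).card : ℝ) := by
          rw [Finset.sum_sub_distrib, Finset.sum_const, nsmul_eq_mul, mul_one,
            Finset.sum_boole]
        rw [hsum, sub_div, div_self hNr.ne']
        exact sub_le_sub_left (hpmarg p hp) 1
      -- negative correlation in averaged form
      have hnegkey : ∀ S ∈ C.powerset,
          (∑ T ∈ ST, ∏ p ∈ S, (1 - if T.Adj p.1 p.2 then (1:ℝ) else 0)) / N ≤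
            ∏ p ∈ S, q p := by
        intro S hS
        have hS' : S ⊆ C := Finset.mem_powerset.mp hS
        calc (∑ T ∈ ST, ∏ p ∈ S, (1 - if T.Adj p.1 p.2 then (1:ℝ) else 0)) / N
            = ∫ ω, ∏ p ∈ S, (1 - if (Tr i0 ω).Adj p.1 p.2 then (1:ℝ) else 0) ∂μ :=
              (aux_integral μ (Tr i0) ST (hspan i0) (hunif i0)
                (fun T => ∏ p ∈ S, (1 - if T.Adj p.1 p.2 then (1:ℝ) else 0))).symm
          _ ≤ ∏ p ∈ S, ∫ ω, (1 - if (Tr i0 ω).Adj p.1 p.2 then (1:ℝ) else 0) ∂μ :=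
              hneg' i0 S hS'
          _ = ∏ p ∈ S, q p := by
              refine Finset.prod_congr rfl (fun p _ => ?_)
              rw [hqdef]
              exact aux_integral μ (Tr i0) ST (hspan i0) (hunif i0)
                (fun T => 1 - if T.Adj p.1 p.2 then (1:ℝ) else 0)
      -- key counting estimate
      have hkey : (B.card : ℝ) * (2:ℝ) ^ ((m:ℝ) - τ) ≤ (N : ℝ) * (2 - 1/(d:ℝ)) ^ m := by
        have hstep1 : ∀ T ∈ B, (2:ℝ) ^ ((m:ℝ) - τ) ≤
            ∏ p ∈ C, ((1 - if T.Adj p.1 p.2 then (1:ℝ) else 0) + 1) := by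
          intro T hT
          have hTST : T ∈ ST := hBsub hT
          have hTcut : ((edgeCut T A).card : ℝ) < τ := (Finset.mem_filter.mp hT).2
          have hfact : ∏ p ∈ C, ((1 - if T.Adj p.1 p.2 then (1:ℝ) else 0) + 1) =
              2 ^ ((C.filter (fun p => ¬ T.Adj p.1 p.2)).card) := by
            have hc : ∀ p ∈ C, ((1 - if T.Adj p.1 p.2 then (1:ℝ) else 0) + 1) =
                if T.Adj p.1 p.2 then (1:ℝ) else 2 := by
              intro p _
              split_ifs <;> ring
            rw [Finset.prod_congr rfl hc, Finset.prod_ite, Finset.prod_const,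
              Finset.prod_const, one_pow, one_mul]
          rw [hfact]
          have hcards := Finset.card_filter_add_card_filter_not
            (s := C) (p := fun p => T.Adj p.1 p.2)
          have hcard : ((C.filter (fun p => ¬ T.Adj p.1 p.2)).card : ℝ) =
              (m:ℝ) - ((edgeCut T A).card : ℝ) := by
            rw [hcutT T hTST]
            have h' : ((C.filter (fun p => T.Adj p.1 p.2)).card : ℝ) +
                ((C.filter (fun p => ¬ T.Adj p.1 p.2)).card : ℝ) = (m:ℝ) := by
              exact_mod_cast hcards
            linarith
          calc (2:ℝ) ^ ((m:ℝ) - τ)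
              ≤ (2:ℝ) ^ (((C.filter (fun p => ¬ T.Adj p.1 p.2)).card : ℝ)) := by
                apply Real.rpow_le_rpow_of_exponent_le one_le_two
                rw [hcard]
                linarith
            _ = 2 ^ ((C.filter (fun p => ¬ T.Adj p.1 p.2)).card) :=
                Real.rpow_natCast 2 _
        calc (B.card : ℝ) * (2:ℝ) ^ ((m:ℝ) - τ)
            = ∑ _T ∈ B, (2:ℝ) ^ ((m:ℝ) - τ) := by
              rw [Finset.sum_const, nsmul_eq_mul]
          _ ≤ ∑ T ∈ B, ∏ p ∈ C, ((1 - if T.Adj p.1 p.2 then (1:ℝ) else 0) + 1) :=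
              Finset.sum_le_sum hstep1
          _ ≤ ∑ T ∈ ST, ∏ p ∈ C, ((1 - if T.Adj p.1 p.2 then (1:ℝ) else 0) + 1) := by
              apply Finset.sum_le_sum_of_subset_of_nonneg hBsub
              intro T _ _
              apply Finset.prod_nonneg
              intro p _
              split_ifs <;> norm_num
          _ = ∑ T ∈ ST, ∑ S ∈ C.powerset, ∏ p ∈ S,
                (1 - if T.Adj p.1 p.2 then (1:ℝ) else 0) := by
              refine Finset.sum_congr rfl (fun T _ => ?_)
              rw [Finset.prod_add]
              simp
          _ = ∑ S ∈ C.powerset, ∑ T ∈ ST, ∏ p ∈ S,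
                (1 - if T.Adj p.1 p.2 then (1:ℝ) else 0) := Finset.sum_comm
          _ ≤ ∑ S ∈ C.powerset, (N:ℝ) * ∏ p ∈ S, q p := by
              refine Finset.sum_le_sum (fun S hS => ?_)
              have h6 := hnegkey S hS
              rw [div_le_iff₀ hNr] at h6
              linarith
          _ = (N:ℝ) * ∑ S ∈ C.powerset, ∏ p ∈ S, q p := by rw [Finset.mul_sum]
          _ = (N:ℝ) * ∏ p ∈ C, (q p + 1) := by
              congr 1
              rw [Finset.prod_add]
              simp
          _ ≤ (N : ℝ) * (2 - 1/(d:ℝ)) ^ m := by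
              apply mul_le_mul_of_nonneg_left _ (le_of_lt hNr)
              calc ∏ p ∈ C, (q p + 1) ≤ ∏ p ∈ C, (2 - 1/(d:ℝ)) := by
                    apply Finset.prod_le_prod
                    · intro p _
                      have := hq_nonneg p
                      linarith
                    · intro p hp
                      have h7 := hq_le p hp
                      have h8 : (1:ℝ)/d ≤ 1 := by
                        rw [div_le_one hdr]
                        exact_mod_cast hd
                      linarith
                _ = (2 - 1/(d:ℝ)) ^ m := by rw [Finset.prod_const, hmdef]
      -- per-tree probability bound
      have htree : (B.card : ℝ) / N ≤ Real.exp (-(m:ℝ) / (8*d)) := by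
        have hRpos : (0:ℝ) < (2:ℝ) ^ ((m:ℝ) - τ) := Real.rpow_pos_of_pos two_pos _
        rw [div_le_iff₀ hNr]
        have hcore : (2 - 1/(d:ℝ)) ^ m ≤
            Real.exp (-(m:ℝ)/(8*d)) * (2:ℝ) ^ ((m:ℝ) - τ) := by
          have hsplit : (2 - 1/(d:ℝ)) = 2 * (1 - 1/(2*d)) := by
            have hdne : (d:ℝ) ≠ 0 := hdr.ne'
            field_simp
          have hb0 : (0:ℝ) ≤ 1 - 1/(2*(d:ℝ)) := by
            have h9 : 1/(2*(d:ℝ)) ≤ 1 := by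
              rw [div_le_one (by positivity)]
              linarith
            linarith
          have h1 : (1 - 1/(2*(d:ℝ))) ^ m ≤ Real.exp (-(1/(2*(d:ℝ)))) ^ m := by
            apply pow_le_pow_left₀ hb0
            have := Real.add_one_le_exp (-(1/(2*(d:ℝ))))
            linarith
          have h2 : Real.exp (-(1/(2*(d:ℝ)))) ^ m = Real.exp (-(m:ℝ)/(2*d)) := by
            rw [← Real.exp_nat_mul]
            congr 1
            ring
          have h3 : Real.exp (-(m:ℝ)/(2*d)) ≤
              Real.exp (-(m:ℝ)/(8*d)) * Real.exp (-(τ * Real.log 2)) := by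
            rw [← Real.exp_add, Real.exp_le_exp, hτdef]
            have hlog : Real.log 2 ≤ 3/4 :=
              le_of_lt (lt_of_lt_of_le Real.log_two_lt_d9 (by norm_num))
            have hnn : (0:ℝ) ≤ (m:ℝ)/(2*d) := by positivity
            have h10 : ((m:ℝ)/(2*d)) * (Real.log 2 - 1) ≤ ((m:ℝ)/(2*d)) * (-(1/4)) :=
              mul_le_mul_of_nonneg_left (by linarith) hnn
            have heq : ((m:ℝ)/(2*d)) * (-(1/4)) = -(m:ℝ)/(8*d) := by ring
            have heq2 : ((m:ℝ)/(2*d)) * (Real.log 2 - 1) =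
                ((m:ℝ)/(2*d)) * Real.log 2 - (m:ℝ)/(2*d) := by ring
            have heq3 : -(m:ℝ)/(2*d) = -((m:ℝ)/(2*d)) := by ring
            rw [heq3]
            nlinarith [h10]
          have h4 : (2:ℝ) ^ ((m:ℝ) - τ) = (2:ℝ)^m * Real.exp (-(τ * Real.log 2)) := by
            have h11 : ((2:ℝ)^(m:ℕ) : ℝ) = Real.exp (Real.log 2 * m) := by
              rw [← Real.rpow_natCast 2 m, Real.rpow_def_of_pos two_pos]
            rw [Real.rpow_def_of_pos two_pos, h11, ← Real.exp_add]
            congr 1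
            ring
          calc (2 - 1/(d:ℝ)) ^ m = (2:ℝ)^m * (1 - 1/(2*(d:ℝ)))^m := by
                rw [hsplit, mul_pow]
            _ ≤ (2:ℝ)^m * (Real.exp (-(m:ℝ)/(8*d)) * Real.exp (-(τ * Real.log 2))) := by
                apply mul_le_mul_of_nonneg_left _ (by positivity)
                calc (1 - 1/(2*(d:ℝ)))^m ≤ Real.exp (-(1/(2*(d:ℝ))))^m := h1
                  _ = Real.exp (-(m:ℝ)/(2*d)) := h2
                  _ ≤ _ := h3
            _ = Real.exp (-(m:ℝ)/(8*d)) * ((2:ℝ)^m * Real.exp (-(τ * Real.log 2))) := by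
                ring
            _ = Real.exp (-(m:ℝ)/(8*d)) * (2:ℝ) ^ ((m:ℝ) - τ) := by rw [h4]
        have h12 : (N:ℝ) * ((2 - 1/(d:ℝ)) ^ m) ≤
            (N:ℝ) * (Real.exp (-(m:ℝ)/(8*d)) * (2:ℝ) ^ ((m:ℝ) - τ)) :=
          mul_le_mul_of_nonneg_left hcore (le_of_lt hNr)
        have h13 : (B.card:ℝ) * (2:ℝ)^((m:ℝ)-τ) ≤
            (Real.exp (-(m:ℝ)/(8*d)) * (N:ℝ)) * (2:ℝ)^((m:ℝ)-τ) := by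
          have h14 : (N:ℝ) * (Real.exp (-(m:ℝ)/(8*d)) * (2:ℝ)^((m:ℝ)-τ)) =
              (Real.exp (-(m:ℝ)/(8*d)) * (N:ℝ)) * (2:ℝ)^((m:ℝ)-τ) := by ring
          linarith [hkey, h12]
        exact le_of_mul_le_mul_right h13 hRpos
      -- conclude
      calc ((B.card : ℝ)/N)^k ≤ (Real.exp (-(m:ℝ)/(8*d)))^k := by
            apply pow_le_pow_left₀ (div_nonneg (Nat.cast_nonneg _) (le_of_lt hNr)) htree
        _ = Real.exp (-(k * (m:ℝ))/(8*d)) := by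
            rw [← Real.exp_nat_mul]
            congr 1
            ring
        _ < Real.exp (-(k*(m:ℝ))/(8*(d:ℝ)^2)) := by
            rw [Real.exp_lt_exp]
            have hkr : (0:ℝ) < k := by exact_mod_cast hk
            have hkm : (0:ℝ) < (k:ℝ) * m := mul_pos hkr hmr
            have h8a : (0:ℝ) < 8*(d:ℝ) := by positivity
            have hlt : 8*(d:ℝ) < 8*(d:ℝ)^2 := by nlinarith
            have h15 := div_lt_div_of_pos_left hkm h8a hlt
            have e1 : -((k:ℝ)*m)/(8*(d:ℝ)) = -((k:ℝ)*m/(8*(d:ℝ))) := by ring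
            have e2 : -((k:ℝ)*m)/(8*(d:ℝ)^2) = -((k:ℝ)*m/(8*(d:ℝ)^2)) := by ring
            rw [e1, e2]
            exact neg_lt_neg h15
  -- assemble in `ℝ≥0∞`
  refine lt_of_le_of_lt hmain ?_
  have hconv : ((B.card : ENNReal)/N)^k = ENNReal.ofReal (((B.card:ℝ)/N)^k) := by
    rw [ENNReal.ofReal_pow (by positivity)]
    congr 1
    rw [ENNReal.ofReal_div_of_pos hNr, ENNReal.ofReal_natCast, ENNReal.ofReal_natCast]
  rw [hconv]
  exact (ENNReal.ofReal_lt_ofReal_iff (Real.exp_pos _)).mpr hreal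
end

section
/- For 0 < p ≤ 1, the three quantities q_2 = (-p - 2√(1-p) + 2)/p, q_1 = (p + √(1-p) - 1)/p (taken twice) are nonnegative and satisfy q_2 + 2q_1 = 1; moreover, if each undirected edge of a G(n,p) random graph is independently replaced by both directed edges with probability q_2 and by a single directed edge in each direction with probability q_1 each, then each directed edge is present with probability q = 1 - √(1-p), independently across directed edges, and p/2 ≤ q ≤ p. -/
/-- Properties of the edge-direction randomization in Process `B_p`: the probabilities
`q₂ = (-p - 2√(1-p) + 2)/p` (both directions) and `q₁ = (p + √(1-p) - 1)/p` (each single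
direction) are nonnegative and sum to one; moreover the resulting joint distribution of
the two directed edges coincides with two independent Bernoulli(`q`) coins where
`q = 1 - √(1-p)` (i.e. `p·q₂ = q²`, `p·q₁ = q(1-q)`, `1-p = (1-q)²`), and
`p/2 ≤ q ≤ p`. -/
theorem directed_randomization_properties (p : ℝ) (hp0 : 0 < p) (hp1 : p ≤ 1) :
    let q₂ : ℝ := (-p - 2 * Real.sqrt (1 - p) + 2) / p
    let q₁ : ℝ := (p + Real.sqrt (1 - p) - 1) / p
    let q : ℝ := 1 - Real.sqrt (1 - p)
    0 ≤ q₂ ∧ 0 ≤ q₁ ∧ q₂ + 2 * q₁ = 1 ∧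
      p * q₂ = q * q ∧ p * q₁ = q * (1 - q) ∧ 1 - p = (1 - q) * (1 - q) ∧
      p / 2 ≤ q ∧ q ≤ p := by
  intro q₂ q₁ q
  have h1p : (0:ℝ) ≤ 1 - p := by linarith
  set s := Real.sqrt (1 - p) with hs
  have hs0 : 0 ≤ s := Real.sqrt_nonneg _
  have hs2 : s ^ 2 = 1 - p := Real.sq_sqrt h1p
  have hs1 : s ≤ 1 := by nlinarith
  refine ⟨?_, ?_, ?_, ?_, ?_, ?_, ?_, ?_⟩
  · apply div_nonneg _ hp0.le; nlinarith
  · apply div_nonneg _ hp0.le; nlinarith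
  · show (-p - 2 * s + 2) / p + 2 * ((p + s - 1) / p) = 1
    rw [mul_div_assoc', ← add_div, div_eq_one_iff_eq hp0.ne']; ring
  · show p * ((-p - 2 * s + 2) / p) = (1 - s) * (1 - s)
    field_simp; nlinarith
  · show p * ((p + s - 1) / p) = (1 - s) * (1 - (1 - s))
    field_simp; nlinarith
  · show 1 - p = (1 - (1 - s)) * (1 - (1 - s)); nlinarith
  · show p / 2 ≤ 1 - s; nlinarith
  · show 1 - s ≤ p; nlinarith
end
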